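/- Let l ≥ 2 and let η_1, …, η_l be Kähler differential 1-forms over k[x], given in coordinates by η_i = Σ_{j=1}^n f_{i,j} dx_j with f_{i,j} ∈ k[x], and let w ∈ Γ^n. For each i let η̃_i = η_1 ∧ ⋯ ∧ η_{i−1} ∧ η_{i+1} ∧ ⋯ ∧ η_l. Then there exist indices 1 ≤ i_1 < i_2 ≤ l such that deg_w η_{i_1} + deg_w η̃_{i_1} = deg_w η_{i_2} + deg_w η̃_{i_2} ≥ deg_w η_i + deg_w η̃_i for all i = 1, …, l. -/

import Mathlib

open MvPolynomial Polynomial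

set_option synthInstance.maxHeartbeats 1000000
set_option maxHeartbeats 1000000

variable {k : Type*} [Field k] [CharZero k] {n : ℕ}
variable {Γ : Type*} [AddCommGroup Γ] [LinearOrder Γ] [IsOrderedAddMonoid Γ]

/-- The `w`-degree of a multivariate polynomial, with `wdeg w 0 = ⊥ = -∞`. -/
noncomputable def wdeg (w : Fin n → Γ) (f : MvPolynomial (Fin n) k) : WithBot Γ :=
  f.support.sup fun d => ((∑ i, d i • w i : Γ) : WithBot Γ)

/-- The leading `w`-homogeneous form `f^w` of `f`. -/
noncomputable def lform (w : Fin n → Γ) (f : MvPolynomial (Fin n) k) :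
    MvPolynomial (Fin n) k :=
  letI : DecidableEq (WithBot Γ) := Classical.decEq _
  ∑ d ∈ f.support.filter
      (fun d => ((∑ i, d i • w i : Γ) : WithBot Γ) = wdeg w f),
    MvPolynomial.monomial d (f.coeff d)

/-- `deg_w^g Φ = max_i deg_w (φ_i g^i)` for `Φ = Σ_i φ_i y^i`. -/
noncomputable def wdegG (w : Fin n → Γ) (g : MvPolynomial (Fin n) k)
    (Φ : Polynomial (MvPolynomial (Fin n) k)) : WithBot Γ :=
  Φ.support.sup fun i => wdeg w (Φ.coeff i * g ^ i)

/-- The leading form `Φ^{w,g}` of `Φ` for the grading in which `x_j` has weight `w_j`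
and `y` has weight `deg_w g`: the sum of `φ_i^w y^i` over those `i` with
`deg_w (φ_i g^i) = deg_w^g Φ`. -/
noncomputable def pLform (w : Fin n → Γ) (g : MvPolynomial (Fin n) k)
    (Φ : Polynomial (MvPolynomial (Fin n) k)) : Polynomial (MvPolynomial (Fin n) k) :=
  letI : DecidableEq (WithBot Γ) := Classical.decEq _
  ∑ i ∈ Φ.support.filter (fun i => wdeg w (Φ.coeff i * g ^ i) = wdegG w g Φ),
    Polynomial.C (lform w (Φ.coeff i)) * Polynomial.X ^ i

/-- `m_w^g(Φ) = min { i : deg_w^g (∂_y^i Φ) = deg_w ((∂_y^i Φ)(g)) }`. -/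
noncomputable def mwg (w : Fin n → Γ) (g : MvPolynomial (Fin n) k)
    (Φ : Polynomial (MvPolynomial (Fin n) k)) : ℕ :=
  sInf {i : ℕ |
    wdegG w g (Polynomial.derivative^[i] Φ) = wdeg w ((Polynomial.derivative^[i] Φ).eval g)}

/-- The `w`-degree of the differential form `dh_1 ∧ ⋯ ∧ dh_s`: the maximum over all
`s`-tuples of indices of the `w`-degree of the corresponding `s × s` Jacobian minor
plus the sum of the corresponding weights (noninjective tuples contribute `⊥`). -/
noncomputable def wedgeDeg (w : Fin n → Γ) {s : ℕ} (h : Fin s → MvPolynomial (Fin n) k) :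
    WithBot Γ :=
  Finset.univ.sup fun e : Fin s → Fin n =>
    wdeg w (Matrix.det (Matrix.of fun a b : Fin s => MvPolynomial.pderiv (e b) (h a)))
      + ((∑ b, w (e b) : Γ) : WithBot Γ)

/-- The initial algebra `A^w`: the `k`-subalgebra generated by `f^w` for `f ∈ A \ {0}`. -/
noncomputable def initAlg (w : Fin n → Γ) (A : Subalgebra k (MvPolynomial (Fin n) k)) :
    Subalgebra k (MvPolynomial (Fin n) k) :=
  Algebra.adjoin k (lform w '' ((A : Set (MvPolynomial (Fin n) k)) \ {0}))

/-- The field of fractions `K^w` of `A^w`, realized as a subfield of the fraction field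
of `k[x]`. -/
noncomputable def KW (w : Fin n → Γ) (A : Subalgebra k (MvPolynomial (Fin n) k)) :
    Subfield (FractionRing (MvPolynomial (Fin n) k)) :=
  Subfield.closure
    (algebraMap (MvPolynomial (Fin n) k) (FractionRing (MvPolynomial (Fin n) k)) ''
      (initAlg w A : Set (MvPolynomial (Fin n) k)))

/-- The field of fractions of a subalgebra `A` of `k[x]`, realized as a subfield of the
fraction field of `k[x]`. -/
noncomputable def fracSub (A : Subalgebra k (MvPolynomial (Fin n) k)) :
    Subfield (FractionRing (MvPolynomial (Fin n) k)) :=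
  Subfield.closure
    (algebraMap (MvPolynomial (Fin n) k) (FractionRing (MvPolynomial (Fin n) k)) ''
      (A : Set (MvPolynomial (Fin n) k)))

/-- A polynomial is `w`-homogeneous if all its monomials have the same `w`-degree. -/
def IsWHom (w : Fin n → Γ) (f : MvPolynomial (Fin n) k) : Prop :=
  ∃ γ : Γ, ∀ d ∈ f.support, (∑ i, d i • w i : Γ) = γ

/-- The `w`-degree of the 1-form `Σ_j c_j dx_j`. -/
noncomputable def formDeg (w : Fin n → Γ) (c : Fin n → MvPolynomial (Fin n) k) : WithBot Γ :=
  Finset.univ.sup fun j => wdeg w (c j) + ((w j : Γ) : WithBot Γ)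

/-- The `w`-degree of the wedge of the `s` 1-forms `η_a = Σ_j c_{a,j} dx_j`: the maximum
over index tuples of the `w`-degree of the corresponding minor of the coefficient matrix
plus the sum of the corresponding weights. -/
noncomputable def wedgeDeg1 (w : Fin n → Γ) {s : ℕ}
    (c : Fin s → Fin n → MvPolynomial (Fin n) k) : WithBot Γ :=
  Finset.univ.sup fun e : Fin s → Fin n =>
    wdeg w (Matrix.det (Matrix.of fun a b : Fin s => c a (e b)))
      + ((∑ b, w (e b) : Γ) : WithBot Γ)

set_option linter.unusedSectionVars false

-- auxiliary
def pdegm (w : Fin n → Γ) (d : Fin n →₀ ℕ) : Γ := ∑ i, d i • w i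

lemma pdegm_add (w : Fin n → Γ) (d e : Fin n →₀ ℕ) :
    pdegm w (d + e) = pdegm w d + pdegm w e := by
  simp [pdegm, Finsupp.add_apply, add_nsmul, Finset.sum_add_distrib]

lemma wdeg_def (w : Fin n → Γ) (f : MvPolynomial (Fin n) k) :
    wdeg w f = f.support.sup fun d => ((pdegm w d : Γ) : WithBot Γ) := rfl

@[simp] lemma wdeg_zero (w : Fin n → Γ) : wdeg w (0 : MvPolynomial (Fin n) k) = ⊥ := by
  simp [wdeg]

lemma le_wdeg {w : Fin n → Γ} {f : MvPolynomial (Fin n) k} {d : Fin n →₀ ℕ}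
    (hd : d ∈ f.support) : ((pdegm w d : Γ) : WithBot Γ) ≤ wdeg w f :=
  Finset.le_sup (f := fun d => ((pdegm w d : Γ) : WithBot Γ)) hd

lemma wdeg_eq_bot_iff {w : Fin n → Γ} {f : MvPolynomial (Fin n) k} :
    wdeg w f = ⊥ ↔ f = 0 := by
  constructor
  · intro h
    by_contra hf
    obtain ⟨d, hd⟩ := MvPolynomial.support_nonempty.mpr hf
    have := le_wdeg (w := w) hd
    rw [h, le_bot_iff] at this
    exact WithBot.coe_ne_bot this
  · rintro rfl; simp

lemma exists_wdeg_eq {w : Fin n → Γ} {f : MvPolynomial (Fin n) k} (hf : f ≠ 0) :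
    ∃ d ∈ f.support, wdeg w f = ((pdegm w d : Γ) : WithBot Γ) := by
  obtain ⟨d, hd, h⟩ := Finset.exists_mem_eq_sup f.support
    (MvPolynomial.support_nonempty.mpr hf) (fun d => ((pdegm w d : Γ) : WithBot Γ))
  exact ⟨d, hd, h⟩

lemma wdeg_neg (w : Fin n → Γ) (f : MvPolynomial (Fin n) k) : wdeg w (-f) = wdeg w f := by
  simp [wdeg, MvPolynomial.support_neg]

lemma wdeg_add_le (w : Fin n → Γ) (f g : MvPolynomial (Fin n) k) :
    wdeg w (f + g) ≤ wdeg w f ⊔ wdeg w g := by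
  refine Finset.sup_le fun d hd => ?_
  rcases Finset.mem_union.mp (MvPolynomial.support_add hd) with h | h
  · exact le_trans (le_wdeg h) le_sup_left
  · exact le_trans (le_wdeg h) le_sup_right

lemma wdeg_sum_le {ι : Type*} (w : Fin n → Γ) (s : Finset ι)
    (f : ι → MvPolynomial (Fin n) k) :
    wdeg w (∑ a ∈ s, f a) ≤ s.sup fun a => wdeg w (f a) := by
  induction s using Finset.cons_induction with
  | empty => simp
  | cons a s ha ih =>
    rw [Finset.sum_cons, Finset.sup_cons]
    exact le_trans (wdeg_add_le w _ _) (sup_le_sup le_rfl ih)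

lemma wdeg_mul_le (w : Fin n → Γ) (f g : MvPolynomial (Fin n) k) :
    wdeg w (f * g) ≤ wdeg w f + wdeg w g := by
  classical
  refine Finset.sup_le fun d hd => ?_
  obtain ⟨u, hu, v, hv, rfl⟩ := Finset.mem_add.mp (MvPolynomial.support_mul f g hd)
  rw [show (∑ i, (u + v) i • w i : Γ) = pdegm w (u + v) from rfl, pdegm_add, WithBot.coe_add]
  exact add_le_add (le_wdeg hu) (le_wdeg hv)

lemma lform_def (w : Fin n → Γ) (f : MvPolynomial (Fin n) k) :
    lform w f = ∑ d ∈ f.support.filter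
      (fun d => ((∑ i, d i • w i : Γ) : WithBot Γ) = wdeg w f),
      MvPolynomial.monomial d (f.coeff d) := by
  rw [lform]
  exact Finset.sum_congr (Finset.filter_congr_decidable _ _ _) (fun _ _ => rfl)

lemma coeff_lform_eq {w : Fin n → Γ} {f : MvPolynomial (Fin n) k} {d : Fin n →₀ ℕ}
    (h : ((pdegm w d : Γ) : WithBot Γ) = wdeg w f) :
    (lform w f).coeff d = f.coeff d := by
  classical
  rw [lform_def, MvPolynomial.coeff_sum]
  by_cases hs : d ∈ f.support
  · rw [Finset.sum_eq_single_of_mem d (Finset.mem_filter.mpr ⟨hs, h⟩)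
      (fun e _ hne => by rw [MvPolynomial.coeff_monomial, if_neg hne]),
      MvPolynomial.coeff_monomial, if_pos rfl]
  · have h0 : f.coeff d = 0 := MvPolynomial.notMem_support_iff.mp hs
    rw [h0]
    refine Finset.sum_eq_zero fun e he => ?_
    rw [MvPolynomial.coeff_monomial]
    split_ifs with hed
    · subst hed; exact h0
    · rfl

lemma coeff_lform_ne {w : Fin n → Γ} {f : MvPolynomial (Fin n) k} {d : Fin n →₀ ℕ}
    (h : ((pdegm w d : Γ) : WithBot Γ) ≠ wdeg w f) :
    (lform w f).coeff d = 0 := by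
  classical
  rw [lform_def, MvPolynomial.coeff_sum]
  refine Finset.sum_eq_zero fun e he => ?_
  rw [MvPolynomial.coeff_monomial]
  split_ifs with hed
  · subst hed; exact absurd (Finset.mem_filter.mp he).2 h
  · rfl

lemma lform_ne_zero {w : Fin n → Γ} {f : MvPolynomial (Fin n) k} (hf : f ≠ 0) :
    lform w f ≠ 0 := by
  obtain ⟨d, hd, h⟩ := exists_wdeg_eq (w := w) hf
  intro h0
  have := coeff_lform_eq (f := f) (d := d) h.symm
  rw [h0] at this
  exact (MvPolynomial.mem_support_iff.mp hd) (by simpa using this.symm)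

lemma mem_support_lform {w : Fin n → Γ} {f : MvPolynomial (Fin n) k} {d : Fin n →₀ ℕ}
    (hd : d ∈ (lform w f).support) : ((pdegm w d : Γ) : WithBot Γ) = wdeg w f := by
  by_contra h
  exact (MvPolynomial.mem_support_iff.mp hd) (coeff_lform_ne h)

lemma wdeg_mul (w : Fin n → Γ) (f g : MvPolynomial (Fin n) k) :
    wdeg w (f * g) = wdeg w f + wdeg w g := by
  classical
  rcases eq_or_ne f 0 with rfl | hf
  · simp
  rcases eq_or_ne g 0 with rfl | hg
  · simp
  refine le_antisymm (wdeg_mul_le w f g) ?_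
  have hfb : wdeg w f ≠ ⊥ := fun h => hf (wdeg_eq_bot_iff.mp h)
  have hgb : wdeg w g ≠ ⊥ := fun h => hg (wdeg_eq_bot_iff.mp h)
  have hFG : lform w f * lform w g ≠ 0 := mul_ne_zero (lform_ne_zero hf) (lform_ne_zero hg)
  obtain ⟨e, he⟩ := MvPolynomial.support_nonempty.mpr hFG
  have he' : ((pdegm w e : Γ) : WithBot Γ) = wdeg w f + wdeg w g := by
    obtain ⟨u, hu, v, hv, rfl⟩ := Finset.mem_add.mp (MvPolynomial.support_mul _ _ he)
    rw [pdegm_add, WithBot.coe_add, mem_support_lform hu, mem_support_lform hv]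
  have hcoeff : (f * g).coeff e = (lform w f * lform w g).coeff e := by
    rw [MvPolynomial.coeff_mul, MvPolynomial.coeff_mul]
    refine Finset.sum_congr rfl fun uv huv => ?_
    have hsum : uv.1 + uv.2 = e := Finset.HasAntidiagonal.mem_antidiagonal.mp huv
    by_cases h1 : f.coeff uv.1 = 0
    · by_cases h1' : ((pdegm w uv.1 : Γ) : WithBot Γ) = wdeg w f
      · rw [coeff_lform_eq h1', h1, zero_mul, zero_mul]
      · rw [coeff_lform_ne h1', h1, zero_mul, zero_mul]
    by_cases h2 : g.coeff uv.2 = 0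
    · by_cases h2' : ((pdegm w uv.2 : Γ) : WithBot Γ) = wdeg w g
      · rw [coeff_lform_eq h2', h2, mul_zero, mul_zero]
      · rw [coeff_lform_ne h2', h2, mul_zero, mul_zero]
    have hu : ((pdegm w uv.1 : Γ) : WithBot Γ) ≤ wdeg w f :=
      le_wdeg (MvPolynomial.mem_support_iff.mpr h1)
    have hv : ((pdegm w uv.2 : Γ) : WithBot Γ) ≤ wdeg w g :=
      le_wdeg (MvPolynomial.mem_support_iff.mpr h2)
    have hpe : ((pdegm w uv.1 : Γ) : WithBot Γ) + ((pdegm w uv.2 : Γ) : WithBot Γ)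
        = wdeg w f + wdeg w g := by
      rw [← WithBot.coe_add, ← pdegm_add, hsum, he']
    have hu' : ((pdegm w uv.1 : Γ) : WithBot Γ) = wdeg w f := by
      by_contra hne
      have : ((pdegm w uv.1 : Γ) : WithBot Γ) + ((pdegm w uv.2 : Γ) : WithBot Γ)
          < wdeg w f + wdeg w g :=
        WithBot.add_lt_add_of_lt_of_le WithBot.coe_ne_bot (lt_of_le_of_ne hu hne) hv
      exact absurd hpe (ne_of_lt this)
    have hv' : ((pdegm w uv.2 : Γ) : WithBot Γ) = wdeg w g := by
      by_contra hne
      have : ((pdegm w uv.1 : Γ) : WithBot Γ) + ((pdegm w uv.2 : Γ) : WithBot Γ)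
          < wdeg w f + wdeg w g :=
        WithBot.add_lt_add_of_le_of_lt WithBot.coe_ne_bot hu (lt_of_le_of_ne hv hne)
      exact absurd hpe (ne_of_lt this)
    rw [coeff_lform_eq hu', coeff_lform_eq hv']
  have hmem : e ∈ (f * g).support := by
    rw [MvPolynomial.mem_support_iff, hcoeff]
    exact MvPolynomial.mem_support_iff.mp he
  rw [← he']
  exact le_wdeg hmem

lemma wdeg_add_eq_left {w : Fin n → Γ} {f g : MvPolynomial (Fin n) k}
    (h : wdeg w g < wdeg w f) : wdeg w (f + g) = wdeg w f := by
  refine le_antisymm (le_trans (wdeg_add_le w f g) (by simp [h.le])) ?_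
  have h2 := wdeg_add_le w (f + g) (-g)
  rw [add_neg_cancel_right, wdeg_neg] at h2
  rcases le_or_gt (wdeg w f) (wdeg w (f + g)) with h3 | h3
  · exact h3
  · exact absurd h2 (not_le.mpr (sup_lt_iff.mpr ⟨h3, h⟩))

lemma wdeg_sum_eq {ι : Type*} {w : Fin n → Γ} (s : Finset ι)
    (f : ι → MvPolynomial (Fin n) k) {i₀ : ι} (hi : i₀ ∈ s)
    (hbot : wdeg w (f i₀) ≠ ⊥)
    (h : ∀ a ∈ s, a ≠ i₀ → wdeg w (f a) < wdeg w (f i₀)) :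
    wdeg w (∑ a ∈ s, f a) = wdeg w (f i₀) := by
  classical
  rw [← Finset.add_sum_erase s f hi]
  refine wdeg_add_eq_left (lt_of_le_of_lt (wdeg_sum_le w _ f) ?_)
  rw [Finset.sup_lt_iff (bot_lt_iff_ne_bot.mpr hbot)]
  exact fun b hb => h b (Finset.mem_of_mem_erase hb) (Finset.ne_of_mem_erase hb)

lemma wdeg_neg_one_pow_mul (w : Fin n → Γ) (m : ℕ) (f : MvPolynomial (Fin n) k) :
    wdeg w ((-1) ^ m * f) = wdeg w f := by
  rcases Nat.even_or_odd m with h | h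
  · rw [h.neg_one_pow, one_mul]
  · rw [h.neg_one_pow, neg_one_mul, wdeg_neg]

lemma add_coe_add (x y : WithBot Γ) (γ δ : Γ) :
    (x + y) + ((γ + δ : Γ) : WithBot Γ) = (x + (γ : WithBot Γ)) + (y + (δ : WithBot Γ)) := by
  rw [WithBot.coe_add, add_add_add_comm]

lemma le_formDeg (w : Fin n → Γ) (cc : Fin n → MvPolynomial (Fin n) k) (j : Fin n) :
    wdeg w (cc j) + ((w j : Γ) : WithBot Γ) ≤ formDeg w cc :=
  Finset.le_sup (f := fun j => wdeg w (cc j) + ((w j : Γ) : WithBot Γ)) (Finset.mem_univ j)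

lemma le_wedgeDeg1 (w : Fin n → Γ) {s : ℕ} (cc : Fin s → Fin n → MvPolynomial (Fin n) k)
    (e : Fin s → Fin n) :
    wdeg w (Matrix.det (Matrix.of fun a b : Fin s => cc a (e b)))
      + ((∑ b, w (e b) : Γ) : WithBot Γ) ≤ wedgeDeg1 w cc :=
  Finset.le_sup (f := fun e : Fin s → Fin n =>
    wdeg w (Matrix.det (Matrix.of fun a b : Fin s => cc a (e b)))
      + ((∑ b, w (e b) : Γ) : WithBot Γ)) (Finset.mem_univ e)

lemma exists_eq_formDeg (w : Fin n → Γ) (cc : Fin n → MvPolynomial (Fin n) k)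
    (h : formDeg w cc ≠ ⊥) :
    ∃ j, formDeg w cc = wdeg w (cc j) + ((w j : Γ) : WithBot Γ) := by
  have hne : (Finset.univ : Finset (Fin n)).Nonempty := by
    rcases Finset.eq_empty_or_nonempty (Finset.univ : Finset (Fin n)) with h' | h'
    · exact absurd (by simp [formDeg, h']) h
    · exact h'
  obtain ⟨j, -, hj⟩ := Finset.exists_mem_eq_sup Finset.univ hne
    (fun j => wdeg w (cc j) + ((w j : Γ) : WithBot Γ))
  exact ⟨j, hj⟩

lemma exists_eq_wedgeDeg1 (w : Fin n → Γ) {s : ℕ} (cc : Fin s → Fin n → MvPolynomial (Fin n) k)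
    (h : wedgeDeg1 w cc ≠ ⊥) :
    ∃ e : Fin s → Fin n, wedgeDeg1 w cc
      = wdeg w (Matrix.det (Matrix.of fun a b : Fin s => cc a (e b)))
        + ((∑ b, w (e b) : Γ) : WithBot Γ) := by
  have hne : (Finset.univ : Finset (Fin s → Fin n)).Nonempty := by
    rcases Finset.eq_empty_or_nonempty (Finset.univ : Finset (Fin s → Fin n)) with h' | h'
    · exact absurd (by simp [wedgeDeg1, h']) h
    · exact h'
  obtain ⟨e, -, he⟩ := Finset.exists_mem_eq_sup Finset.univ hne
    (fun e : Fin s → Fin n =>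
      wdeg w (Matrix.det (Matrix.of fun a b : Fin s => cc a (e b)))
        + ((∑ b, w (e b) : Γ) : WithBot Γ))
  exact ⟨e, he⟩

/-- For `l + 1 ≥ 2` Kähler differential 1-forms `η_i = Σ_j c_{i,j} dx_j` over `k[x]`,
there exist indices `i₁ < i₂` such that
`deg_w η_{i₁} + deg_w η̃_{i₁} = deg_w η_{i₂} + deg_w η̃_{i₂} ≥ deg_w η_i + deg_w η̃_i`
for all `i`, where `η̃_i` is the wedge of all the forms except `η_i`. -/
theorem stmt19 (l : ℕ) (hl : 1 ≤ l) (c : Fin (l + 1) → Fin n → MvPolynomial (Fin n) k)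
    (w : Fin n → Γ) :
    ∃ i₁ i₂ : Fin (l + 1), i₁ < i₂ ∧
      formDeg w (c i₁) + wedgeDeg1 w (fun s : Fin l => c (i₁.succAbove s))
        = formDeg w (c i₂) + wedgeDeg1 w (fun s : Fin l => c (i₂.succAbove s)) ∧
      ∀ i : Fin (l + 1),
        formDeg w (c i) + wedgeDeg1 w (fun s : Fin l => c (i.succAbove s))
          ≤ formDeg w (c i₁) + wedgeDeg1 w (fun s : Fin l => c (i₁.succAbove s)) := by
  classical
  have hnt : Nontrivial (Fin (l + 1)) := ⟨⟨0, Fin.last l, by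
    intro h
    have := congrArg Fin.val h
    simp [Fin.val_last] at this
    omega⟩⟩
  set v : Fin (l + 1) → WithBot Γ := fun i =>
    formDeg w (c i) + wedgeDeg1 w (fun s : Fin l => c (i.succAbove s)) with hv
  suffices hsuf : ∃ a b : Fin (l + 1), a < b ∧ v a = v b ∧ ∀ i, v i ≤ v a by
    obtain ⟨a, b, h1, h2, h3⟩ := hsuf
    exact ⟨a, b, h1, h2, h3⟩
  obtain ⟨i₁, -, hmax'⟩ := Finset.exists_max_image Finset.univ v Finset.univ_nonempty
  have hmax : ∀ i, v i ≤ v i₁ := fun i => hmax' i (Finset.mem_univ i)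
  have key : ∃ i₂, i₂ ≠ i₁ ∧ v i₂ = v i₁ := by
    rcases eq_or_ne (v i₁) ⊥ with hbot | hbot
    · obtain ⟨i₂, hi₂⟩ := exists_ne i₁
      refine ⟨i₂, hi₂, ?_⟩
      rw [hbot]
      exact le_bot_iff.mp (hbot ▸ hmax i₂)
    by_contra hcon
    push_neg at hcon
    have hlt : ∀ i, i ≠ i₁ → v i < v i₁ := fun i hi => (hmax i).lt_of_ne (hcon i hi)
    have hA : formDeg w (c i₁) ≠ ⊥ := by
      intro h
      exact hbot (by simp [hv, h])
    have hB : wedgeDeg1 w (fun s : Fin l => c (i₁.succAbove s)) ≠ ⊥ := by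
      intro h
      exact hbot (by simp [hv, h])
    obtain ⟨j₀, hj₀⟩ := exists_eq_formDeg w (c i₁) hA
    obtain ⟨e₀, he₀⟩ := exists_eq_wedgeDeg1 w (fun s : Fin l => c (i₁.succAbove s)) hB
    set g : Fin (l + 1) → Fin n := Fin.cons j₀ e₀ with hg
    set N : Matrix (Fin (l + 1)) (Fin (l + 1)) (MvPolynomial (Fin n) k) :=
      Matrix.of fun a b => c a (g b) with hN
    set W : Γ := ∑ b : Fin (l + 1), w (g b) with hW
    set D : Fin (l + 1) → MvPolynomial (Fin n) k := fun a =>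
      Matrix.det (Matrix.of fun s b : Fin l => c (a.succAbove s) (e₀ b)) with hD
    have hg0 : g 0 = j₀ := by rw [hg]; exact Fin.cons_zero _ _
    have hgs : ∀ b : Fin l, g b.succ = e₀ b := fun b => by rw [hg]; exact Fin.cons_succ _ _ _
    have hdetN : N.det = ∑ a : Fin (l + 1), (-1) ^ (a : ℕ) * (c a j₀ * D a) := by
      rw [Matrix.det_succ_column_zero]
      refine Finset.sum_congr rfl fun a _ => ?_
      have h1 : N a 0 = c a j₀ := by rw [hN]; simp [hg0]
      have h2 : N.submatrix a.succAbove Fin.succ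
          = Matrix.of fun s b : Fin l => c (a.succAbove s) (e₀ b) := by
        ext s b
        rw [hN]
        simp [Matrix.submatrix_apply, hgs]
      rw [h1, h2, mul_assoc]
    have hW1 : W = w j₀ + ∑ b, w (e₀ b) := by
      rw [hW, Fin.sum_univ_succ, hg0]
      simp [hgs]
    -- degrees of the terms
    have hle : ∀ a : Fin (l + 1), wdeg w (c a j₀ * D a) + (W : WithBot Γ) ≤ v a := by
      intro a
      rw [wdeg_mul, hW1, add_coe_add]
      exact add_le_add (le_formDeg w (c a) j₀)
        (le_wedgeDeg1 w (fun s : Fin l => c (a.succAbove s)) e₀)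
    have heq1 : wdeg w (c i₁ j₀ * D i₁) + (W : WithBot Γ) = v i₁ := by
      rw [wdeg_mul, hW1, add_coe_add, hv]
      show wdeg w (c i₁ j₀) + ((w j₀ : Γ) : WithBot Γ) + _ = _
      rw [← hj₀, ← he₀]
    have hWne : ((W : WithBot Γ)) ≠ ⊥ := WithBot.coe_ne_bot
    have htne : wdeg w (c i₁ j₀ * D i₁) ≠ ⊥ := by
      intro h
      rw [h, WithBot.bot_add] at heq1
      exact hbot heq1.symm
    have hterm : ∀ a : Fin (l + 1), wdeg w ((-1) ^ (a : ℕ) * (c a j₀ * D a))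
        = wdeg w (c a j₀ * D a) := fun a => wdeg_neg_one_pow_mul w _ _
    have hstrict : ∀ a ∈ (Finset.univ : Finset (Fin (l + 1))), a ≠ i₁ →
        wdeg w ((-1) ^ (a : ℕ) * (c a j₀ * D a))
          < wdeg w ((-1) ^ (i₁ : ℕ) * (c i₁ j₀ * D i₁)) := by
      intro a _ ha
      rw [hterm, hterm]
      have h1 : wdeg w (c a j₀ * D a) + (W : WithBot Γ)
          < wdeg w (c i₁ j₀ * D i₁) + (W : WithBot Γ) :=
        heq1.symm ▸ lt_of_le_of_lt (hle a) (hlt a ha)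
      exact (WithBot.add_lt_add_iff_right hWne).mp h1
    have htne' : wdeg w ((-1) ^ ((i₁ : Fin (l + 1)) : ℕ) * (c i₁ j₀ * D i₁)) ≠ ⊥ := by
      rw [hterm]; exact htne
    have hdeg : wdeg w N.det = wdeg w (c i₁ j₀ * D i₁) := by
      rw [hdetN, wdeg_sum_eq Finset.univ _ (Finset.mem_univ i₁) htne' hstrict, hterm]
    -- row expansion along i₂
    obtain ⟨i₂, hi₂⟩ := exists_ne i₁
    have hexp : N.det = ∑ b : Fin (l + 1), (-1) ^ ((i₂ : ℕ) + (b : ℕ))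
        * (c i₂ (g b) * Matrix.det (Matrix.of fun s b' : Fin l =>
            c (i₂.succAbove s) (g (b.succAbove b')))) := by
      rw [Matrix.det_succ_row N i₂]
      refine Finset.sum_congr rfl fun b _ => ?_
      have h1 : N i₂ b = c i₂ (g b) := by rw [hN]; simp
      have h2 : N.submatrix i₂.succAbove b.succAbove
          = Matrix.of fun s b' : Fin l => c (i₂.succAbove s) (g (b.succAbove b')) := by
        ext s b'
        rw [hN]
        simp [Matrix.submatrix_apply]
      rw [h1, h2, mul_assoc]
    have hsumle : wdeg w N.det ≤ Finset.univ.sup fun b : Fin (l + 1) =>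
        wdeg w (c i₂ (g b) * Matrix.det (Matrix.of fun s b' : Fin l =>
          c (i₂.succAbove s) (g (b.succAbove b')))) := by
      rw [hexp]
      refine le_trans (wdeg_sum_le w _ _) ?_
      refine Finset.sup_le fun b hb => ?_
      rw [wdeg_neg_one_pow_mul]
      exact Finset.le_sup (f := fun b : Fin (l + 1) =>
        wdeg w (c i₂ (g b) * Matrix.det (Matrix.of fun s b' : Fin l =>
          c (i₂.succAbove s) (g (b.succAbove b'))))) hb
    obtain ⟨b₁, -, hb₁⟩ := Finset.exists_mem_eq_sup Finset.univ Finset.univ_nonempty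
      (fun b : Fin (l + 1) =>
        wdeg w (c i₂ (g b) * Matrix.det (Matrix.of fun s b' : Fin l =>
          c (i₂.succAbove s) (g (b.succAbove b')))))
    have hWsplit : W = w (g b₁) + ∑ b', w (g (b₁.succAbove b')) := by
      rw [hW]
      exact Fin.sum_univ_succAbove _ b₁
    have hchain : v i₁ ≤ v i₂ := by
      calc v i₁ = wdeg w (c i₁ j₀ * D i₁) + (W : WithBot Γ) := heq1.symm
        _ = wdeg w N.det + (W : WithBot Γ) := by rw [hdeg]
        _ ≤ wdeg w (c i₂ (g b₁) * Matrix.det (Matrix.of fun s b' : Fin l =>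
              c (i₂.succAbove s) (g (b₁.succAbove b')))) + (W : WithBot Γ) := by
            exact add_le_add_left (le_trans hsumle (le_of_eq hb₁)) _
        _ = (wdeg w (c i₂ (g b₁)) + ((w (g b₁) : Γ) : WithBot Γ))
            + (wdeg w (Matrix.det (Matrix.of fun s b' : Fin l =>
                c (i₂.succAbove s) (g (b₁.succAbove b'))))
              + ((∑ b', w (g (b₁.succAbove b')) : Γ) : WithBot Γ)) := by
            rw [wdeg_mul, hWsplit, add_coe_add]
        _ ≤ formDeg w (c i₂) + wedgeDeg1 w (fun s : Fin l => c (i₂.succAbove s)) :=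
            add_le_add (le_formDeg w (c i₂) (g b₁))
              (le_wedgeDeg1 w (fun s : Fin l => c (i₂.succAbove s)) (fun b' => g (b₁.succAbove b')))
        _ = v i₂ := by rw [hv]
    exact absurd hchain (not_le.mpr (hlt i₂ hi₂))
  obtain ⟨i₂, hne, heq⟩ := key
  rcases lt_or_gt_of_ne hne with h | h
  · exact ⟨i₂, i₁, h, heq, fun i => (hmax i).trans heq.ge⟩
  · exact ⟨i₁, i₂, h, heq.symm, hmax⟩
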